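/- Let e ≥ 2 and a,b ∈ ℕ with 0 ≤ a ≤ q-1 and b - ea ≥ 0. Set s̃ = min{⌊(b-q)/e⌋, a} if b ≥ q and s̃ = -1 otherwise. Then the code C_e(a,b) = Σ_{d=0}^{a} span{(0^{a-d}, α_1^d, …, α_q^d)} ⊗ PRS_q(b - ed + 1) ⊆ F_q^{(q+1)^2} has dimension (s̃+1)(q+1) + (a - s̃)(b + 1 - e(a + s̃ + 1)/2). -/

import Mathlib

/-- Evaluation points of the projective Reed–Solomon code: the point at infinity `(0,1)`
(indexed by `none`) and the affine points `(1,α)` for `α ∈ F` (indexed by `some α`). -/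
noncomputable def PRSpt (F : Type*) [Field F] (p : Option F) : Fin 2 → F :=
  Option.elim p ![(0 : F), 1] (fun α => ![1, α])

/-- The projective Reed–Solomon code `PRS_q(k)`: the image of the space of homogeneous
polynomials of degree `k - 1` in two variables under evaluation at the `q+1` points of
`ℙ¹(F)`.  By convention it is `{0}` for `k ≤ 0` (and it is the full space for `k ≥ q+1`). -/
noncomputable def PRS (F : Type*) [Field F] (k : ℤ) : Submodule F (Option F → F) :=
  if k ≤ 0 then ⊥
  else (MvPolynomial.homogeneousSubmodule (Fin 2) F (k - 1).toNat).map
    (LinearMap.pi fun p : Option F => (MvPolynomial.aeval (PRSpt F p)).toLinearMap)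

/-- The linear map `c ↦ v ⊗ c`, sending a word `c` to the matrix `(v i * c j)_{i,j}`. -/
noncomputable def vTensor (F : Type*) [Field F] {ι₁ ι₂ : Type*} (v : ι₁ → F) :
    (ι₂ → F) →ₗ[F] (ι₁ → ι₂ → F) where
  toFun c := fun i j => v i * c j
  map_add' c d := by funext i j; simp [mul_add]
  map_smul' a c := by funext i j; simp only [Pi.smul_apply, smul_eq_mul, RingHom.id_apply]; ring

/-- The vector `(0^{a-d}, α₁^d, …, α_q^d) ∈ F^{q+1}` (with the convention `0^0 = 1`). -/
noncomputable def vproj (F : Type*) [Field F] (a d : ℕ) : Option F → F :=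
  fun p => Option.elim p (if d = a then (1 : F) else 0) (fun α => α ^ d)

/-- The code `C_e(a,b) = Σ_{d=0}^{a} ⟨(0^{a-d}, α₁^d, …, α_q^d)⟩ ⊗ PRS_q(b - ed + 1)`
inside `F^{(q+1)²}`: the AG code on the Hirzebruch surface `H_e` parametrized by
`aS_e + bF_e`, evaluated at all `(q+1)²` rational points. -/
noncomputable def CE (F : Type*) [Field F] (e a b : ℕ) :
    Submodule F (Option F → Option F → F) :=
  ⨆ d ∈ Finset.Iic a, (PRS F ((b : ℤ) - e * d + 1)).map (vTensor F (vproj F a d))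

lemma pow_reduce (F : Type*) [Field F] [Fintype F] (j : ℕ) (hj : 1 ≤ j) :
    ∃ j', 1 ≤ j' ∧ j' ≤ Fintype.card F - 1 ∧ ∀ α : F, α ^ j = α ^ j' := by
  induction j using Nat.strong_induction_on with
  | _ j ih =>
    by_cases h : j ≤ Fintype.card F - 1
    · exact ⟨j, hj, h, fun _ => rfl⟩
    · have hq : 2 ≤ Fintype.card F := Fintype.one_lt_card
      obtain ⟨j', h1, h2, h3⟩ := ih (j - Fintype.card F + 1) (by omega) (by omega)
      refine ⟨j', h1, h2, fun α => ?_⟩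
      have hsplit : α ^ j = α ^ (j - Fintype.card F + 1) := by
        conv_lhs => rw [show j = (j - Fintype.card F) + Fintype.card F by omega]
        rw [pow_add, FiniteField.pow_card, ← pow_succ]
      rw [hsplit, h3 α]

open Polynomial in

lemma linIndep_powers (F : Type*) [Field F] [Fintype F] (m : ℕ) (hm : m ≤ Fintype.card F) :
    LinearIndependent F (fun (j : Fin m) (α : F) => α ^ (j : ℕ)) := by
  rcases Nat.eq_zero_or_pos m with rfl | hm0
  · exact linearIndependent_empty_type
  rw [Fintype.linearIndependent_iff]
  intro g hg i
  have hp : (∑ j : Fin m, Polynomial.C (g j) * Polynomial.X ^ (j : ℕ)) = 0 := by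
    apply Polynomial.eq_zero_of_natDegree_lt_card_of_eval_eq_zero _
      (Function.injective_id (α := F))
    · intro α
      have := congrFun hg α
      simpa [Polynomial.eval_finset_sum, Finset.sum_apply] using this
    · calc (∑ j : Fin m, Polynomial.C (g j) * Polynomial.X ^ (j : ℕ)).natDegree
          ≤ m - 1 := by
            apply Polynomial.natDegree_sum_le_of_forall_le
            intro j _
            refine le_trans (Polynomial.natDegree_C_mul_le _ _) ?_
            simpa using Nat.le_sub_one_of_lt j.isLt
        _ < Fintype.card F := lt_of_lt_of_le (Nat.sub_lt hm0 one_pos) hm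
  have := congrArg (fun p => Polynomial.coeff p (i : ℕ)) hp
  simp only [Polynomial.finset_sum_coeff, Polynomial.coeff_C_mul, Polynomial.coeff_X_pow,
    Polynomial.coeff_zero, mul_ite, mul_one, mul_zero] at this
  simp only [Fin.val_inj, Finset.sum_ite_eq, Finset.mem_univ, if_true] at this
  exact this

lemma linIndep_vproj (F : Type*) [Field F] [Fintype F] (a : ℕ)
    (ha : a + 1 ≤ Fintype.card F) :
    LinearIndependent F (fun d : Fin (a + 1) => vproj F a d) := by
  apply LinearIndependent.of_comp (LinearMap.funLeft F F some)
  exact linIndep_powers F (a + 1) ha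

noncomputable def uvec (F : Type*) [Field F] [Fintype F] (n j : ℕ) : Option F → F :=
  vproj F n (if j = min n (Fintype.card F) then n else j)

lemma linIndep_uvec (F : Type*) [Field F] [Fintype F] (n : ℕ) :
    LinearIndependent F (fun j : Fin (min n (Fintype.card F) + 1) => uvec F n j) := by
  have hq2 : 2 ≤ Fintype.card F := Fintype.one_lt_card
  have hmq : min n (Fintype.card F) ≤ Fintype.card F := min_le_right _ _
  have hmn : min n (Fintype.card F) ≤ n := min_le_left _ _
  rw [Fintype.linearIndependent_iff]
  intro g hg
  have hnone := congrFun hg none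
  simp only [Finset.sum_apply, Pi.smul_apply, Pi.zero_apply, smul_eq_mul] at hnone
  rw [Fin.sum_univ_castSucc] at hnone
  have hz : ∀ j : Fin (min n (Fintype.card F)), uvec F n (j.castSucc : ℕ) none = 0 := by
    intro j
    have hj : (j : ℕ) < min n (Fintype.card F) := j.isLt
    have h1 : (j : ℕ) ≠ min n (Fintype.card F) := by omega
    have h2 : (j : ℕ) ≠ n := by omega
    simp only [uvec, vproj, Option.elim, Fin.coe_castSucc, if_neg h1, if_neg h2]
  have hone : uvec F n ((Fin.last (min n (Fintype.card F))) : ℕ) none = 1 := by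
    simp [uvec, vproj]
  have hlast : g (Fin.last (min n (Fintype.card F))) = 0 := by
    rw [Finset.sum_eq_zero (fun j _ => by rw [hz j, mul_zero]), zero_add, hone, mul_one] at hnone
    exact hnone
  have hfun : ∀ j : Fin (min n (Fintype.card F)), g j.castSucc = 0 := by
    have key : ∑ j : Fin (min n (Fintype.card F)), g j.castSucc • (fun α : F => α ^ (j : ℕ)) = 0 := by
      funext α
      have hα := congrFun hg (some α)
      simp only [Finset.sum_apply, Pi.smul_apply, Pi.zero_apply, smul_eq_mul] at hα
      rw [Fin.sum_univ_castSucc, hlast, zero_mul, add_zero] at hα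
      simp only [Finset.sum_apply, Pi.smul_apply, Pi.zero_apply, smul_eq_mul]
      rw [← hα]
      apply Finset.sum_congr rfl
      intro j _
      congr 1
      have h1 : (j : ℕ) ≠ min n (Fintype.card F) := by have := j.isLt; omega
      simp only [uvec, vproj, Option.elim, Fin.coe_castSucc, if_neg h1]
    exact fun j => Fintype.linearIndependent_iff.mp
      (linIndep_powers F (min n (Fintype.card F)) hmq) _ key j
  intro i
  induction i using Fin.lastCases with
  | last => exact hlast
  | cast j => exact hfun j

lemma aeval_monomial_PRSpt (F : Type*) [Field F] (p : Option F) (d : Fin 2 →₀ ℕ) :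
    MvPolynomial.aeval (PRSpt F p) (MvPolynomial.monomial d (1 : F)) =
      PRSpt F p 0 ^ d 0 * PRSpt F p 1 ^ d 1 := by
  rw [MvPolynomial.aeval_monomial, map_one, one_mul]
  rw [Finsupp.prod_fintype _ _ (fun i => pow_zero _)]
  exact Fin.prod_univ_two _

lemma eval_monomial_eq_vproj (F : Type*) [Field F] (n : ℕ) (d : Fin 2 →₀ ℕ)
    (hd : d 0 + d 1 = n) (p : Option F) :
    MvPolynomial.aeval (PRSpt F p) (MvPolynomial.monomial d (1 : F)) = vproj F n (d 1) p := by
  rw [aeval_monomial_PRSpt]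
  cases p with
  | none =>
    have h0 : PRSpt F (none : Option F) 0 = 0 := rfl
    have h1 : PRSpt F (none : Option F) 1 = 1 := rfl
    rw [h0, h1, one_pow, mul_one, zero_pow_eq, vproj]
    simp only [Option.elim]
    by_cases h : d 1 = n
    · rw [if_pos (by omega : d 0 = 0), if_pos h]
    · rw [if_neg (by omega : ¬ d 0 = 0), if_neg h]
  | some α =>
    have h0 : PRSpt F (some α) 0 = 1 := rfl
    have h1 : PRSpt F (some α) 1 = α := rfl
    rw [h0, h1, one_pow, one_mul]
    rfl

lemma degree_fin2 (d : Fin 2 →₀ ℕ) : d.degree = d 0 + d 1 := by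
  rw [Finsupp.degree_apply, Finset.sum_subset (Finset.subset_univ _)
    (fun x _ hx => Finsupp.notMem_support_iff.mp hx), Fin.sum_univ_two]

lemma vproj_mem_PRS (F : Type*) [Field F] (n j : ℕ) (hj : j ≤ n) :
    vproj F n j ∈ PRS F ((n : ℤ) + 1) := by
  have hk : ¬ ((n : ℤ) + 1 ≤ 0) := by omega
  rw [PRS, if_neg hk]
  have hn : ((n : ℤ) + 1 - 1).toNat = n := by omega
  rw [hn]
  set d : Fin 2 →₀ ℕ := Finsupp.single 0 (n - j) + Finsupp.single 1 j with hd
  have hd0 : d 0 = n - j := by simp [hd, Finsupp.single_apply]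
  have hd1 : d 1 = j := by simp [hd, Finsupp.single_apply]
  refine ⟨MvPolynomial.monomial d 1, ?_, ?_⟩
  · rw [SetLike.mem_coe, MvPolynomial.mem_homogeneousSubmodule]
    apply MvPolynomial.isHomogeneous_monomial
    rw [degree_fin2, hd0, hd1]
    omega
  · funext p
    rw [LinearMap.pi_apply]
    have := eval_monomial_eq_vproj F n d (by rw [hd0, hd1]; omega) p
    rw [AlgHom.toLinearMap_apply, this, hd1]

lemma PRS_le_span (F : Type*) [Field F] (n : ℕ) :
    PRS F ((n : ℤ) + 1) ≤ Submodule.span F (Set.range (fun j : Fin (n+1) => vproj F n j)) := by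
  have hk : ¬ ((n : ℤ) + 1 ≤ 0) := by omega
  rw [PRS, if_neg hk]
  have hn : ((n : ℤ) + 1 - 1).toNat = n := by omega
  rw [hn]
  rintro _ ⟨P, hP, rfl⟩
  rw [SetLike.mem_coe, MvPolynomial.mem_homogeneousSubmodule] at hP
  have hPsum : P = ∑ v ∈ P.support, MvPolynomial.monomial v (MvPolynomial.coeff v P) :=
    P.support_sum_monomial_coeff.symm
  rw [hPsum, map_sum]
  apply Submodule.sum_mem
  intro v hv
  have hvdeg : v 0 + v 1 = n := by
    have h := hP (MvPolynomial.mem_support_iff.mp hv)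
    rw [Pi.one_def, ← Finsupp.degree_eq_weight_one, degree_fin2] at h
    exact h
  have hmono : MvPolynomial.monomial v (MvPolynomial.coeff v P) =
      MvPolynomial.coeff v P • MvPolynomial.monomial v (1 : F) := by
    rw [MvPolynomial.smul_monomial, smul_eq_mul, mul_one]
  rw [hmono, map_smul]
  apply Submodule.smul_mem
  have himg : (LinearMap.pi fun p : Option F => (MvPolynomial.aeval (PRSpt F p)).toLinearMap)
      (MvPolynomial.monomial v (1:F)) = vproj F n (v 1) := by
    funext p
    rw [LinearMap.pi_apply, AlgHom.toLinearMap_apply]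
    exact eval_monomial_eq_vproj F n v hvdeg p
  rw [himg]
  exact Submodule.subset_span ⟨⟨v 1, by omega⟩, rfl⟩

noncomputable def tfam (F : Type*) [Field F] [Fintype F] (e a b : ℕ)
    (i : Σ d : Fin (a + 1), Fin (min (b - e * d) (Fintype.card F) + 1)) :
    Option F → Option F → F :=
  vTensor F (vproj F a i.1) (uvec F (b - e * i.1) i.2)

lemma linIndep_tfam (F : Type*) [Field F] [Fintype F] (e a b : ℕ)
    (ha : a + 1 ≤ Fintype.card F) : LinearIndependent F (tfam F e a b) := by
  rw [Fintype.linearIndependent_iff]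
  intro g hg
  have hstep : ∀ (d : Fin (a + 1)) (p' : Option F),
      ∑ j : Fin (min (b - e * d) (Fintype.card F) + 1),
        g ⟨d, j⟩ * uvec F (b - e * d) j p' = 0 := by
    intro d p'
    have hv := Fintype.linearIndependent_iff.mp (linIndep_vproj F a ha)
    refine hv (fun d' => ∑ j, g ⟨d', j⟩ * uvec F (b - e * d') j p') ?_ d
    funext p
    have h0 := congrFun (congrFun hg p) p'
    simp only [Finset.sum_apply, Pi.smul_apply, Pi.zero_apply, smul_eq_mul] at h0 ⊢
    rw [← Finset.univ_sigma_univ, Finset.sum_sigma] at h0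
    rw [← h0]
    apply Finset.sum_congr rfl
    intro d' _
    rw [Finset.sum_mul]
    apply Finset.sum_congr rfl
    intro j _
    simp only [tfam, vTensor, LinearMap.coe_mk, AddHom.coe_mk]
    ring
  intro i
  obtain ⟨d, j⟩ := i
  have hu := Fintype.linearIndependent_iff.mp (linIndep_uvec F (b - e * d))
  refine hu (fun j => g ⟨d, j⟩) ?_ j
  funext p'
  simp only [Finset.sum_apply, Pi.smul_apply, Pi.zero_apply, smul_eq_mul]
  exact hstep d p'

lemma uvec_eq_vproj_self (F : Type*) [Field F] [Fintype F] (n : ℕ) :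
    uvec F n (min n (Fintype.card F)) = vproj F n n := by
  rw [uvec, if_pos rfl]

lemma CE_eq_span (F : Type*) [Field F] [Fintype F] (e a b : ℕ)
    (ha : a + 1 ≤ Fintype.card F) (hb : e * a ≤ b) :
    CE F e a b = Submodule.span F (Set.range (tfam F e a b)) := by
  have hq2 : 2 ≤ Fintype.card F := Fintype.one_lt_card
  apply le_antisymm
  · rw [CE]
    apply iSup_le; intro d; apply iSup_le; intro hd
    rw [Finset.mem_Iic] at hd
    have hed : e * d ≤ b := le_trans (Nat.mul_le_mul_left e hd) hb
    set n := b - e * d with hn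
    have hk : (b : ℤ) - e * d + 1 = (n : ℤ) + 1 := by rw [hn]; push_cast [hed]; ring
    rw [hk]
    calc (PRS F ((n : ℤ) + 1)).map (vTensor F (vproj F a d))
        ≤ (Submodule.span F (Set.range (fun j : Fin (n+1) => vproj F n j))).map
            (vTensor F (vproj F a d)) := Submodule.map_mono (PRS_le_span F n)
      _ = Submodule.span F ((vTensor F (vproj F a d)) ''
            (Set.range (fun j : Fin (n+1) => vproj F n j))) := Submodule.map_span _ _
      _ ≤ Submodule.span F (Set.range (tfam F e a b)) := by
          rw [Submodule.span_le]
          rintro _ ⟨_, ⟨j, rfl⟩, rfl⟩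
          apply Submodule.subset_span
          have hdlt : d < a + 1 := by omega
          by_cases hjn : (j : ℕ) = n
          · refine ⟨⟨⟨d, hdlt⟩, Fin.last _⟩, ?_⟩
            show vTensor F (vproj F a d)
              (uvec F (b - e * d) (min (b - e * d) (Fintype.card F))) = _
            rw [← hn, uvec_eq_vproj_self]
            congr 1
            show vproj F n n = vproj F n (j : ℕ)
            rw [hjn]
          · have hjlt : (j : ℕ) < n := by have := j.isLt; omega
            by_cases hjq : (j : ℕ) < Fintype.card F
            · refine ⟨⟨⟨d, hdlt⟩, ⟨j, show (j:ℕ) < min (b - e * d) (Fintype.card F) + 1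
                by omega⟩⟩, ?_⟩
              show vTensor F (vproj F a d) (uvec F (b - e * d) (j : ℕ)) = _
              rw [← hn]
              congr 1
              show uvec F n (j : ℕ) = vproj F n (j : ℕ)
              rw [uvec, if_neg (by omega)]
            · obtain ⟨j', h1, h2, h3⟩ := pow_reduce F j (by omega)
              refine ⟨⟨⟨d, hdlt⟩, ⟨j', show j' < min (b - e * d) (Fintype.card F) + 1
                by omega⟩⟩, ?_⟩
              show vTensor F (vproj F a d) (uvec F (b - e * d) j') = _
              rw [← hn]
              congr 1
              show uvec F n j' = vproj F n (j : ℕ)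
              rw [uvec, if_neg (by omega)]
              funext p
              cases p with
              | none =>
                show (if j' = n then (1:F) else 0) = (if (j:ℕ) = n then 1 else 0)
                rw [if_neg (by omega), if_neg hjn]
              | some α => exact (h3 α).symm
  · rw [Submodule.span_le]
    rintro _ ⟨⟨d, j⟩, rfl⟩
    have hd : (d : ℕ) ≤ a := by omega
    have hed : e * d ≤ b := le_trans (Nat.mul_le_mul_left e hd) hb
    have hmem : uvec F (b - e * d) j ∈ PRS F (((b - e * d : ℕ) : ℤ) + 1) := by
      rw [uvec]
      apply vproj_mem_PRS
      split
      · exact le_rfl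
      · have := j.isLt; omega
    have hmem2 : tfam F e a b ⟨d, j⟩ ∈
        (PRS F ((b : ℤ) - e * d + 1)).map (vTensor F (vproj F a d)) := by
      have hk : (b : ℤ) - e * d + 1 = ((b - e * d : ℕ) : ℤ) + 1 := by push_cast [hed]; ring
      rw [hk]
      exact ⟨uvec F (b - e * d) j, hmem, rfl⟩
    have hle : (PRS F ((b : ℤ) - e * d + 1)).map (vTensor F (vproj F a (d : ℕ))) ≤ CE F e a b :=
      le_iSup₂ (f := fun d (_ : d ∈ Finset.Iic a) =>
        (PRS F ((b : ℤ) - e * d + 1)).map (vTensor F (vproj F a d))) ((d : ℕ))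
        (Finset.mem_Iic.mpr hd)
    exact hle hmem2

lemma gauss_sum_q (n : ℕ) : (∑ i ∈ Finset.range n, (i:ℚ)) = n*(n-1)/2 := by
  induction n with
  | zero => simp
  | succ n ih => rw [Finset.sum_range_succ, ih]; push_cast; ring

/-- the dimension of `C_e(a,b)` for `e ≥ 2`, `0 ≤ a ≤ q-1`, `b - ea ≥ 0`:
`dim = (s̃ + 1)(q + 1) + (a - s̃)(b + 1 - e(a + s̃ + 1)/2)` where `s̃ = min{⌊(b-q)/e⌋, a}`
if `b ≥ q` and `s̃ = -1` otherwise. -/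
theorem CE_dim (F : Type*) [Field F] [Fintype F] (q e a b : ℕ) (s : ℤ)
    (hq : Fintype.card F = q) (he : 2 ≤ e) (ha : a ≤ q - 1) (hb : e * a ≤ b)
    (hs : s = if (q : ℤ) ≤ (b : ℤ) then min (((b : ℤ) - q) / e) (a : ℤ) else -1) :
    (Module.finrank F (CE F e a b) : ℚ) =
      ((s : ℚ) + 1) * (q + 1) + ((a : ℚ) - s) * ((b : ℚ) + 1 - e * ((a : ℚ) + s + 1) / 2) := by
  subst hq
  have hq2 : 2 ≤ Fintype.card F := Fintype.one_lt_card
  have haq : a + 1 ≤ Fintype.card F := by omega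
  have hepos : (0:ℤ) < (e:ℤ) := by exact_mod_cast (by omega : 0 < e)
  have hs1 : -1 ≤ s := by
    rw [hs]; split
    · exact le_min (le_trans (by omega) (Int.ediv_nonneg (by omega) (by omega))) (by omega)
    · omega
  have hs2 : s ≤ a := by
    rw [hs]; split
    · exact min_le_right _ _
    · omega
  set t := (s+1).toNat with htdef
  have ht : (t:ℤ) = s + 1 := Int.toNat_of_nonneg (by omega)
  have hta : t ≤ a + 1 := by omega
  have h1 : Module.finrank F (CE F e a b) =
      ∑ d ∈ Finset.range (a+1), (min (b - e*d) (Fintype.card F) + 1) := by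
    rw [CE_eq_span F e a b haq hb, finrank_span_eq_card (linIndep_tfam F e a b haq),
      Fintype.card_sigma]
    simp only [Fintype.card_fin]
    exact Fin.sum_univ_eq_sum_range (fun d => min (b - e * d) (Fintype.card F) + 1) (a+1)
  have hterm : ∀ d ∈ Finset.range (a+1),
      ((min (b - e*d) (Fintype.card F) + 1 : ℕ) : ℚ) =
        if d < t then ((Fintype.card F : ℚ) + 1) else (b:ℚ) - e*d + 1 := by
    intro d hd
    rw [Finset.mem_range] at hd
    have hda : d ≤ a := by omega
    have hed : e * d ≤ b := le_trans (Nat.mul_le_mul_left e hda) hb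
    by_cases hdt : d < t
    · rw [if_pos hdt]
      have hds : (d:ℤ) ≤ s := by omega
      have hqb : (Fintype.card F : ℤ) ≤ (b:ℤ) := by
        by_contra hc
        rw [hs, if_neg hc] at hds
        omega
      have hdiv : (d:ℤ) ≤ ((b:ℤ) - Fintype.card F) / e := by
        rw [hs, if_pos hqb] at hds
        exact le_trans hds (min_le_left _ _)
      have hmul : (d:ℤ) * e ≤ (b:ℤ) - Fintype.card F :=
        (Int.le_ediv_iff_mul_le hepos).mp hdiv
      have hcastmul : ((e * d : ℕ) : ℤ) = (d:ℤ) * e := by push_cast; ring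
      have hmin : min (b - e*d) (Fintype.card F) = Fintype.card F :=
        min_eq_right (by omega)
      rw [hmin]
      push_cast
      ring
    · rw [if_neg hdt]
      have hsd : s < (d:ℤ) := by omega
      have hlt : b - e*d < Fintype.card F := by
        by_cases hqb : (Fintype.card F : ℤ) ≤ (b:ℤ)
        · have hs' : s = min (((b:ℤ) - Fintype.card F) / e) (a:ℤ) := by rw [hs, if_pos hqb]
          have hmin2 : s = ((b:ℤ) - Fintype.card F) / e := by
            rcases min_cases (((b:ℤ) - Fintype.card F) / e) (a:ℤ) with ⟨h, _⟩ | ⟨h, h'⟩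
            · omega
            · omega
          have hlow : (b:ℤ) - Fintype.card F <
              (((b:ℤ) - Fintype.card F) / e + 1) * e := Int.lt_ediv_add_one_mul_self _ hepos
          have hd1 : ((b:ℤ) - Fintype.card F) / e + 1 ≤ (d:ℤ) := by omega
          have hmulstep : (((b:ℤ) - Fintype.card F) / e + 1) * e ≤ (d:ℤ) * e :=
            mul_le_mul_of_nonneg_right hd1 (le_of_lt hepos)
          have hbig : (b:ℤ) - Fintype.card F < (d:ℤ) * e := lt_of_lt_of_le hlow hmulstep
          have hcastmul : ((e * d : ℕ) : ℤ) = (d:ℤ) * e := by push_cast; ring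
          omega
        · omega
      have hmin : min (b - e*d) (Fintype.card F) = b - e*d := min_eq_left (by omega)
      rw [hmin]
      push_cast [hed]
      ring
  rw [h1, Nat.cast_sum, Finset.sum_congr rfl hterm,
    Finset.range_eq_Ico, ← Finset.sum_Ico_consecutive _ (Nat.zero_le t) hta]
  have hpart1 : ∑ d ∈ Finset.Ico 0 t,
      (if d < t then ((Fintype.card F : ℚ) + 1) else (b:ℚ) - e*d + 1)
      = t * ((Fintype.card F : ℚ) + 1) := by
    rw [Finset.sum_congr rfl (fun d hd => if_pos (Finset.mem_Ico.mp hd).2),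
      Finset.sum_const, Nat.card_Ico, Nat.sub_zero, nsmul_eq_mul]
  have hpart2 : ∑ d ∈ Finset.Ico t (a+1),
      (if d < t then ((Fintype.card F : ℚ) + 1) else (b:ℚ) - e*d + 1)
      = ((a:ℚ) + 1 - t) * ((b:ℚ) + 1) - e * (((a:ℚ)+1)*a - t*(t-1))/2 := by
    rw [Finset.sum_congr rfl (fun d hd => if_neg (by
      have := (Finset.mem_Ico.mp hd).1; omega))]
    have hico : (∑ d ∈ Finset.Ico t (a+1), (d:ℚ)) = (((a:ℚ)+1)*a - t*(t-1))/2 := by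
      have hcons := Finset.sum_Ico_consecutive (fun d => (d:ℚ)) (Nat.zero_le t) hta
      rw [← Finset.range_eq_Ico, ← Finset.range_eq_Ico] at hcons
      have g1 := gauss_sum_q (a+1)
      have g2 := gauss_sum_q t
      push_cast at g1 g2 ⊢
      rw [← hcons] at g1
      rw [g2] at g1
      linarith
    have hsum2 : ∑ d ∈ Finset.Ico t (a+1), ((b:ℚ) - e*d + 1)
        = ∑ d ∈ Finset.Ico t (a+1), (((b:ℚ) + 1) - e*(d:ℚ)) := by
      apply Finset.sum_congr rfl; intro d _; ring
    rw [hsum2, Finset.sum_sub_distrib, Finset.sum_const, Nat.card_Ico, nsmul_eq_mul,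
      ← Finset.mul_sum, hico]
    have hcast : ((a + 1 - t : ℕ) : ℚ) = (a:ℚ) + 1 - t := by
      push_cast [hta]
      ring
    rw [hcast]
    ring
  rw [hpart1, hpart2]
  have hst : (s:ℚ) = (t:ℚ) - 1 := by
    have : ((t:ℤ):ℚ) = ((s+1 : ℤ):ℚ) := by exact_mod_cast congrArg (fun z : ℤ => (z:ℚ)) ht
    push_cast at this
    linarith
  rw [hst]
  ring
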